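/- Let Q = {u ∈ B₀ : ‖A_n u‖ ≤ 2ℓ α₂ⁿ ‖u‖} where B₀ = E ⊕ E′, ‖A_n u‖ ≤ ℓ α₂ⁿ ‖u‖ for u ∈ E, ‖A_n v‖ ≥ ℓ⁻¹ α₁ⁿ ‖v‖ for v ∈ E′, and max{‖v₁‖,‖v₂‖} ≤ ℓ‖v₁+v₂‖ for v₁ ∈ E, v₂ ∈ E′. Then every v ∈ Q satisfies dist(v, E) ≤ (2+ℓ)·ℓ²·(α₂/α₁)ⁿ·‖v‖. -/

import Mathlib

open Metric

/-- Vectors in the cone `Q = {u ∈ B₀ : ‖A_n u‖ ≤ 2ℓ α₂ⁿ ‖u‖}` are close to `E`: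
every `v ∈ Q` satisfies `dist(v,E) ≤ (2+ℓ) ℓ² (α₂/α₁)ⁿ ‖v‖`. -/
theorem cone_close_to_E
    {B : Type*} [NormedAddCommGroup B] [NormedSpace ℝ B]
    (An : B →L[ℝ] B) (B₀ E E' : Submodule ℝ B)
    (ℓ α₁ α₂ : ℝ) (n : ℕ) (hℓ : 1 ≤ ℓ) (hα₂ : 0 < α₂) (hα : α₂ < α₁)
    (hsplit : ∀ v ∈ B₀, ∃ v₁ ∈ E, ∃ v₂ ∈ E', v = v₁ + v₂)
    (hAE : ∀ u ∈ E, ‖An u‖ ≤ ℓ * α₂ ^ n * ‖u‖)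
    (hAE' : ∀ v ∈ E', ℓ⁻¹ * α₁ ^ n * ‖v‖ ≤ ‖An v‖)
    (hdom : ∀ v₁ ∈ E, ∀ v₂ ∈ E', max ‖v₁‖ ‖v₂‖ ≤ ℓ * ‖v₁ + v₂‖) :
    ∀ v ∈ B₀, ‖An v‖ ≤ 2 * ℓ * α₂ ^ n * ‖v‖ →
      infDist v (E : Set B) ≤ (2 + ℓ) * ℓ ^ 2 * (α₂ / α₁) ^ n * ‖v‖ := by
  intro v hv hQ
  obtain ⟨v₁, hv₁, v₂, hv₂, hvs⟩ := hsplit v hv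
  have hℓ0 : (0:ℝ) < ℓ := lt_of_lt_of_le one_pos hℓ
  have hα₁ : (0:ℝ) < α₁ := hα₂.trans hα
  have hα₁n : (0:ℝ) < α₁ ^ n := pow_pos hα₁ n
  have hα₂n : (0:ℝ) < α₂ ^ n := pow_pos hα₂ n
  have h1 : ‖v₁‖ ≤ ℓ * ‖v‖ := by
    have := hdom v₁ hv₁ v₂ hv₂
    rw [hvs]; exact le_trans (le_max_left _ _) this
  -- bound ‖An v₂‖
  have hAv₂ : ‖An v₂‖ ≤ (2*ℓ + ℓ^2) * α₂ ^ n * ‖v‖ := by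
    have : (v₂ : B) = v - v₁ := by rw [hvs]; abel
    have h2 : ‖An v₂‖ ≤ ‖An v‖ + ‖An v₁‖ := by
      rw [this, map_sub]; exact norm_sub_le _ _
    have h3 : ‖An v₁‖ ≤ ℓ * α₂ ^ n * ‖v₁‖ := hAE v₁ hv₁
    nlinarith [norm_nonneg (An v₁), norm_nonneg v₁,
      mul_le_mul_of_nonneg_left h1 (by positivity : (0:ℝ) ≤ ℓ * α₂ ^ n)]
  -- bound ‖v₂‖
  have hv₂b : ‖v₂‖ ≤ (2 + ℓ) * ℓ ^ 2 * (α₂ / α₁) ^ n * ‖v‖ := by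
    have h4 := hAE' v₂ hv₂
    have h5 : ℓ⁻¹ * α₁ ^ n * ‖v₂‖ ≤ (2*ℓ + ℓ^2) * α₂ ^ n * ‖v‖ := h4.trans hAv₂
    rw [div_pow]
    rw [inv_mul_eq_div, div_mul_eq_mul_div, div_le_iff₀ hℓ0] at h5
    have h6 : 0 ≤ (2 * ℓ + ℓ ^ 2) * α₂ ^ n * ‖v‖ * ℓ - α₁ ^ n * ‖v₂‖ := by linarith
    rw [← sub_nonneg]
    have hexp : (2 + ℓ) * ℓ ^ 2 * (α₂ ^ n / α₁ ^ n) * ‖v‖ - ‖v₂‖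
        = ((2 * ℓ + ℓ ^ 2) * α₂ ^ n * ‖v‖ * ℓ - α₁ ^ n * ‖v₂‖) / α₁ ^ n := by
      field_simp
    rw [hexp]
    positivity
  calc infDist v (E : Set B) ≤ dist v v₁ := infDist_le_dist_of_mem hv₁
    _ = ‖v₂‖ := by rw [dist_eq_norm, hvs]; congr 1; abel
    _ ≤ _ := hv₂b
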